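/- Let Q be an anisotropic integral binary quadratic form (Q(n) = 0 implies n = 0 over the rationals). If m, n ∈ Z² satisfy Q(m) = Q(n), then for all sufficiently large primes N there exists B ∈ SO(Q, Z/NZ) with m ≡ nB (mod N). -/

import Mathlib

lemma qf_rotation_identities (q₁ q₂ q₃ m0 m1 n0 n1 u v t a b c e : ℤ)
    (hu : u = 2*q₁*m0*n0 + q₂*(m0*n1 + m1*n0) + 2*q₃*m1*n1)
    (hv : v = m1*n0 - m0*n1)
    (ht : t = q₁*n0^2 + q₂*n0*n1 + q₃*n1^2)
    (ha : a = u - v*q₂) (hb : b = 2*v*q₁) (hc : c = -(2*v*q₃)) (he : e = u + v*q₂)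
    (hQ : q₁*m0^2 + q₂*m0*m1 + q₃*m1^2 = t) :
    a*e - b*c = (2*t)^2 ∧
    q₁*a^2 + q₂*a*b + q₃*b^2 = (2*t)^2*q₁ ∧
    2*q₁*a*c + q₂*(a*e + b*c) + 2*q₃*b*e = (2*t)^2*q₂ ∧
    q₁*c^2 + q₂*c*e + q₃*e^2 = (2*t)^2*q₃ ∧
    n0*a + n1*c = 2*t*m0 ∧
    n0*b + n1*e = 2*t*m1 := by
  subst ht hu hv ha hb hc he
  refine ⟨?_, ?_, ?_, ?_, by ring, by ring⟩
  · linear_combination (4*(q₁*n0^2+q₂*n0*n1+q₃*n1^2)) * hQ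
  · linear_combination (4*q₁*(q₁*n0^2+q₂*n0*n1+q₃*n1^2)) * hQ
  · linear_combination (4*q₂*(q₁*n0^2+q₂*n0*n1+q₃*n1^2)) * hQ
  · linear_combination (4*q₃*(q₁*n0^2+q₂*n0*n1+q₃*n1^2)) * hQ

theorem exists_so_relating_equal_values
    (q₁ q₂ q₃ : ℤ)
    (haniso : ∀ x y : ℚ, (q₁ : ℚ) * x ^ 2 + q₂ * x * y + q₃ * y ^ 2 = 0 → x = 0 ∧ y = 0)
    (m n : Fin 2 → ℤ)
    (hQ : q₁ * (m 0) ^ 2 + q₂ * (m 0) * (m 1) + q₃ * (m 1) ^ 2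
        = q₁ * (n 0) ^ 2 + q₂ * (n 0) * (n 1) + q₃ * (n 1) ^ 2) :
    ∃ N₀ : ℕ, ∀ N : ℕ, N.Prime → N₀ < N →
      ∃ B : Matrix (Fin 2) (Fin 2) (ZMod N),
        B.det = 1 ∧
        (∀ v : Fin 2 → ZMod N,
          (q₁ : ZMod N) * (Matrix.vecMul v B 0) ^ 2 + q₂ * (Matrix.vecMul v B 0) * (Matrix.vecMul v B 1)
            + q₃ * (Matrix.vecMul v B 1) ^ 2
          = (q₁ : ZMod N) * (v 0) ^ 2 + q₂ * (v 0) * (v 1) + q₃ * (v 1) ^ 2) ∧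
        (fun i => ((m i : ZMod N))) = Matrix.vecMul (fun i => ((n i : ZMod N))) B := by
  by_cases ht0 : q₁ * (n 0) ^ 2 + q₂ * (n 0) * (n 1) + q₃ * (n 1) ^ 2 = 0
  · -- degenerate case: Q(n)=0, so n = 0 and m = 0 by anisotropy
    have hnQ : (q₁ : ℚ) * (n 0 : ℚ) ^ 2 + q₂ * (n 0 : ℚ) * (n 1 : ℚ) + q₃ * (n 1 : ℚ) ^ 2 = 0 := by
      exact_mod_cast ht0
    have hmQ : (q₁ : ℚ) * (m 0 : ℚ) ^ 2 + q₂ * (m 0 : ℚ) * (m 1 : ℚ) + q₃ * (m 1 : ℚ) ^ 2 = 0 := by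
      exact_mod_cast hQ.trans ht0
    obtain ⟨hn0, hn1⟩ := haniso _ _ hnQ
    obtain ⟨hm0, hm1⟩ := haniso _ _ hmQ
    have hn0' : n 0 = 0 := by exact_mod_cast hn0
    have hn1' : n 1 = 0 := by exact_mod_cast hn1
    have hm0' : m 0 = 0 := by exact_mod_cast hm0
    have hm1' : m 1 = 0 := by exact_mod_cast hm1
    refine ⟨0, fun N hN _ => ⟨1, Matrix.det_one, fun v => by rw [Matrix.vecMul_one], ?_⟩⟩
    rw [Matrix.vecMul_one]
    funext i
    fin_cases i <;> simp [hm0', hm1', hn0', hn1']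
  · -- main case
    obtain ⟨key1, key2, key3, key4, key5, key6⟩ :=
      qf_rotation_identities q₁ q₂ q₃ (m 0) (m 1) (n 0) (n 1) _ _ _ _ _ _ _
        rfl rfl rfl rfl rfl rfl rfl hQ
    set u : ℤ := 2*q₁*m 0*n 0 + q₂*(m 0*n 1 + m 1*n 0) + 2*q₃*m 1*n 1 with hu
    set v : ℤ := m 1*n 0 - m 0*n 1 with hv
    set t : ℤ := q₁*(n 0)^2 + q₂*(n 0)*(n 1) + q₃*(n 1)^2 with htd
    refine ⟨(2*t).natAbs, fun N hN hlt => ?_⟩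
    haveI : Fact N.Prime := ⟨hN⟩
    have ht : t ≠ 0 := by
      intro h; apply ht0; linear_combination h
    have hδ : ((2*t : ℤ) : ZMod N) ≠ 0 := by
      intro h
      rw [ZMod.intCast_zmod_eq_zero_iff_dvd] at h
      have h2 : (2*t : ℤ) ≠ 0 := mul_ne_zero two_ne_zero ht
      have h3 : (N : ℤ) ≤ |2*t| := Int.le_of_dvd (abs_pos.mpr h2) ((dvd_abs _ _).mpr h)
      rw [Int.abs_eq_natAbs] at h3
      omega
    have hδ' : (2 * (t : ZMod N)) ≠ 0 := by
      push_cast at hδ; exact hδ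
    -- cast the integer identities
    have c1 := congrArg (fun z : ℤ => (z : ZMod N)) key1
    have c2 := congrArg (fun z : ℤ => (z : ZMod N)) key2
    have c3 := congrArg (fun z : ℤ => (z : ZMod N)) key3
    have c4 := congrArg (fun z : ℤ => (z : ZMod N)) key4
    have c5 := congrArg (fun z : ℤ => (z : ZMod N)) key5
    have c6 := congrArg (fun z : ℤ => (z : ZMod N)) key6
    push_cast at c1 c2 c3 c4 c5 c6
    set d : ZMod N := (2 * (t : ZMod N))⁻¹ with hd
    refine ⟨!![d * ((u : ZMod N) - v*q₂), d * (2*v*q₁);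
               d * (-(2*v*q₃)), d * ((u : ZMod N) + v*q₂)], ?_, ?_, ?_⟩
    · rw [Matrix.det_fin_two_of]
      linear_combination d^2 * c1 + (2*(t:ZMod N)*d + 1) * (mul_inv_cancel₀ hδ' : (2 * (t : ZMod N)) * d = 1)
    · intro w
      have hdinv : (2 * (t : ZMod N)) * d = 1 := mul_inv_cancel₀ hδ'
      simp only [Matrix.vecMul, dotProduct, Fin.sum_univ_two, Matrix.cons_val',
        Matrix.cons_val_zero, Matrix.cons_val_one, Matrix.head_cons, Matrix.empty_val',
        Matrix.cons_val_fin_one, Matrix.head_fin_const, Matrix.of_apply]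
      linear_combination d^2 * ((w 0)^2 * c2 + (w 0) * (w 1) * c3 + (w 1)^2 * c4)
        + ((q₁ : ZMod N) * (w 0)^2 + (q₂ : ZMod N) * (w 0) * (w 1) + (q₃ : ZMod N) * (w 1)^2)
          * ((2 * (t : ZMod N)) * d + 1) * hdinv
    · funext i
      fin_cases i
      · simp only [Matrix.vecMul, dotProduct, Fin.sum_univ_two, Matrix.cons_val',
          Matrix.cons_val_zero, Matrix.cons_val_one, Matrix.head_cons, Matrix.empty_val',
          Matrix.cons_val_fin_one, Matrix.head_fin_const, Matrix.of_apply, Fin.isValue]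
        simp only [Fin.zero_eta, Fin.mk_one, Matrix.cons_val_zero, Matrix.cons_val_one, Matrix.head_cons]
        linear_combination -d*c5 - (m 0 : ZMod N) * (mul_inv_cancel₀ hδ' : (2 * (t : ZMod N)) * d = 1)
      · simp only [Matrix.vecMul, dotProduct, Fin.sum_univ_two, Matrix.cons_val',
          Matrix.cons_val_zero, Matrix.cons_val_one, Matrix.head_cons, Matrix.empty_val',
          Matrix.cons_val_fin_one, Matrix.head_fin_const, Matrix.of_apply, Fin.isValue]
        simp only [Fin.zero_eta, Fin.mk_one, Matrix.cons_val_zero, Matrix.cons_val_one, Matrix.head_cons]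
        linear_combination -d*c6 - (m 1 : ZMod N) * (mul_inv_cancel₀ hδ' : (2 * (t : ZMod N)) * d = 1)
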